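/- Let k be a field of characteristic not two and Δ, Δ' ∈ k*. The Lie algebras L(−Δ,1) and L(−Δ',1) are isomorphic if and only if Δ/Δ' is a nonzero sum of two squares in k. In particular, L(−Δ,1) is split if and only if Δ is a sum of two squares. -/

import Mathlib

set_option maxHeartbeats 1000000

/-- The bracket of `L(α,β)` on `k³`. -/
def Lbracket {k : Type*} [Field k] (α β : k) (u v : Fin 3 → k) : Fin 3 → k :=
  ![α * (u 1 * v 2 - u 2 * v 1), β * (u 2 * v 0 - u 0 * v 2), u 0 * v 1 - u 1 * v 0]

/-- Explicit construction: if `Δ/Δ' = x²+y²` then `L(-Δ,1) ≅ L(-Δ',1)`. -/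
lemma construct_iso {k : Type*} [Field k] (Δ Δ' x y : k) (hΔ : Δ ≠ 0) (hΔ' : Δ' ≠ 0)
    (hxy : Δ / Δ' = x ^ 2 + y ^ 2) :
    ∃ g : (Fin 3 → k) ≃ₗ[k] (Fin 3 → k),
      ∀ u v : Fin 3 → k, g (Lbracket (-Δ) 1 u v) = Lbracket (-Δ') 1 (g u) (g v) := by
  have hs : x ^ 2 + y ^ 2 ≠ 0 := by rw [← hxy]; exact div_ne_zero hΔ hΔ'
  have hd : Δ = Δ' * (x ^ 2 + y ^ 2) := by
    field_simp at hxy; linear_combination hxy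
  refine ⟨⟨⟨⟨fun u => ![u 0, x * u 1 - y * u 2, y * u 1 + x * u 2], ?_⟩, ?_⟩,
      fun v => ![v 0, (x * v 1 + y * v 2) / (x ^ 2 + y ^ 2),
        (-y * v 1 + x * v 2) / (x ^ 2 + y ^ 2)], ?_, ?_⟩, ?_⟩
  · intro u v; funext i; fin_cases i <;> simp <;> ring
  · intro c u; funext i; fin_cases i <;> simp <;> ring
  · intro u; funext i; fin_cases i <;> simp <;> field_simp <;> ring
  · intro v; funext i; fin_cases i <;> simp <;> field_simp <;> ring
  · intro u v; funext i; fin_cases i <;> simp [Lbracket] <;> (try field_simp) <;>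
      (first
        | linear_combination (u 1 * v 2 - u 2 * v 1) * hd
        | linear_combination (u 2 * v 1 - u 1 * v 2) * hd
        | ring)

/-- Arithmetic core: Witt-type cancellation for `⟨1,-Δ,-Δ⟩ ≅ ⟨1,-Δ',-Δ'⟩`. -/
lemma sum_sq_core {k : Type*} [Field k] (h2 : (2:k) ≠ 0) (Δ Δ' u0 u1 u2 a0 a1 a2 : k)
    (hΔ' : Δ' ≠ 0)
    (H1 : u0^2 - Δ'*(u1^2+u2^2) = 1)
    (H2 : a0^2 - Δ'*(a1^2+a2^2) = -Δ)
    (H3 : u0*a0 - Δ'*(u1*a1+u2*a2) = 0) :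
    ∃ x y : k, Δ/Δ' = x^2 + y^2 := by
  by_cases hneg : ∃ i : k, i^2 = -1
  · obtain ⟨i, hi⟩ := hneg
    have gen : ∀ c : k, c = ((c+1)/2)^2 + (i*(c-1)/2)^2 := by
      intro c
      field_simp
      linear_combination (-(c-1)^2) * hi
    exact ⟨(Δ/Δ' + 1)/2, i*(Δ/Δ' - 1)/2, gen _⟩
  · have hz : ∀ x y : k, x^2 + y^2 = 0 → x = 0 ∧ y = 0 := by
      intro x y hxy
      by_cases hy : y = 0
      · subst hy; simp at hxy; exact ⟨hxy, rfl⟩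
      · exfalso; apply hneg
        refine ⟨x/y, ?_⟩
        rw [div_pow, div_eq_iff (pow_ne_zero 2 hy)]
        linear_combination hxy
    by_cases h12 : u1 = 0 ∧ u2 = 0
    · obtain ⟨h1, h2'⟩ := h12; subst h1; subst h2'
      have hu0 : u0 ≠ 0 := by
        intro h; rw [h] at H1; simp at H1
      have ha0 : a0 = 0 := by
        have : u0 * a0 = 0 := by linear_combination H3
        rcases mul_eq_zero.mp this with h | h
        · exact absurd h hu0
        · exact h
      subst ha0
      refine ⟨a1, a2, ?_⟩
      field_simp
      linear_combination H2
    · have hp : u1^2 + u2^2 ≠ 0 := fun h => h12 (hz _ _ h)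
      by_cases hu0 : u0 = 0
      · subst hu0
        have hm : u1*a1 + u2*a2 = 0 := by
          have : Δ' * (u1*a1+u2*a2) = 0 := by linear_combination -H3
          exact (mul_eq_zero.mp this).resolve_left hΔ'
        set p := u1^2 + u2^2 with hp_def
        set d := u1*a2 - u2*a1 with hd_def
        have key : Δ * p = Δ' * (d^2 + a0^2*p^2) := by
          rw [hp_def, hd_def]
          linear_combination (u1^2+u2^2) * H2 + (a0^2*(u1^2+u2^2)) * H1 +
            (Δ'*(u1*a1+u2*a2)) * hm
        refine ⟨(d*u1 - a0*p*u2)/p, (d*u2 + a0*p*u1)/p, ?_⟩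
        field_simp
        linear_combination p * key
      · set p := u1^2 + u2^2 with hp_def
        set d := u1*a2 - u2*a1 with hd_def
        set m := u1*a1 + u2*a2 with hm_def
        have key : Δ * (u0^2*p) = Δ' * (m^2 + d^2*u0^2) := by
          rw [hp_def, hd_def, hm_def]
          linear_combination (u0^2*(u1^2+u2^2)) * H2 + (Δ'*(u1*a1+u2*a2)^2) * H1 +
            (-(u1^2+u2^2)*(u0*a0 + Δ'*(u1*a1+u2*a2))) * H3
        refine ⟨(m*u1 - d*u0*u2)/(u0*p), (m*u2 + d*u0*u1)/(u0*p), ?_⟩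
        field_simp
        linear_combination p * key

/-- Forward direction: an isomorphism `L(-Δ,1) ≅ L(-Δ',1)` forces `Δ/Δ'` to be a sum of
two squares. -/
lemma forward_dir {k : Type*} [Field k] (h2 : (2:k) ≠ 0) (Δ Δ' : k) (hΔ : Δ ≠ 0) (hΔ' : Δ' ≠ 0)
    (g : (Fin 3 → k) ≃ₗ[k] (Fin 3 → k))
    (hg : ∀ u v, g (Lbracket (-Δ) 1 u v) = Lbracket (-Δ') 1 (g u) (g v)) :
    ∃ x y : k, Δ/Δ' = x^2 + y^2 := by
  set u := g ![1,0,0] with hu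
  set a := g ![0,1,0] with ha
  have e01 : Lbracket (-Δ) 1 ![1,0,0] ![0,1,0] = ![(0:k),0,1] := by
    funext i; fin_cases i <;> simp [Lbracket]
  have e12 : Lbracket (-Δ) 1 ![0,1,0] ![0,0,1] = (-Δ) • ![(1:k),0,0] := by
    funext i; fin_cases i <;> simp [Lbracket]
  have e20 : Lbracket (-Δ) 1 ![0,0,1] ![1,0,0] = ![(0:k),1,0] := by
    funext i; fin_cases i <;> simp [Lbracket]
  have hb : g ![(0:k),0,1] = Lbracket (-Δ') 1 u a := by rw [← e01, hg]
  have hA : Lbracket (-Δ') 1 a (Lbracket (-Δ') 1 u a) = (-Δ) • u := by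
    rw [← hb]
    have h := hg ![0,1,0] ![0,0,1]
    rw [e12, map_smul] at h
    exact h.symm
  have hB : Lbracket (-Δ') 1 (Lbracket (-Δ') 1 u a) u = a := by
    rw [← hb]
    have h := hg ![0,0,1] ![1,0,0]
    rw [e20] at h
    exact h.symm
  have hind : ∀ c₁ c₂ : k, c₁ • u + c₂ • a = 0 → c₁ = 0 ∧ c₂ = 0 := by
    intro c₁ c₂ h
    have h' : g (c₁ • ![1,0,0] + c₂ • ![0,1,0]) = g 0 := by
      rw [map_add, map_smul, map_smul, map_zero, ← hu, ← ha]; exact h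
    have h0 := g.injective h'
    refine ⟨?_, ?_⟩
    · have := congrFun h0 0; simpa using this
    · have := congrFun h0 1; simpa using this
  have hA0 := congrFun hA 0
  have hA1 := congrFun hA 1
  have hA2 := congrFun hA 2
  have hB0 := congrFun hB 0
  have hB1 := congrFun hB 1
  have hB2 := congrFun hB 2
  simp [Lbracket] at hA0 hA1 hA2 hB0 hB1 hB2
  have hv1 : ((a 0^2 - Δ'*(a 1^2+a 2^2)) + Δ) • u +
      (-(a 0*u 0 - Δ'*(a 1*u 1+a 2*u 2))) • a = 0 := by
    funext i
    fin_cases i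
    · show ((a 0^2 - Δ'*(a 1^2+a 2^2)) + Δ) * u 0 + (-(a 0*u 0 - Δ'*(a 1*u 1+a 2*u 2))) * a 0 = 0
      linear_combination -hA0
    · show ((a 0^2 - Δ'*(a 1^2+a 2^2)) + Δ) * u 1 + (-(a 0*u 0 - Δ'*(a 1*u 1+a 2*u 2))) * a 1 = 0
      linear_combination hA1
    · show ((a 0^2 - Δ'*(a 1^2+a 2^2)) + Δ) * u 2 + (-(a 0*u 0 - Δ'*(a 1*u 1+a 2*u 2))) * a 2 = 0
      linear_combination hA2
  have hv2 : (-(u 0*a 0 - Δ'*(u 1*a 1+u 2*a 2))) • u +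
      ((u 0^2 - Δ'*(u 1^2+u 2^2)) - 1) • a = 0 := by
    funext i
    fin_cases i
    · show (-(u 0*a 0 - Δ'*(u 1*a 1+u 2*a 2))) * u 0 + ((u 0^2 - Δ'*(u 1^2+u 2^2)) - 1) * a 0 = 0
      linear_combination hB0
    · show (-(u 0*a 0 - Δ'*(u 1*a 1+u 2*a 2))) * u 1 + ((u 0^2 - Δ'*(u 1^2+u 2^2)) - 1) * a 1 = 0
      linear_combination hB1
    · show (-(u 0*a 0 - Δ'*(u 1*a 1+u 2*a 2))) * u 2 + ((u 0^2 - Δ'*(u 1^2+u 2^2)) - 1) * a 2 = 0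
      linear_combination hB2
  obtain ⟨k1, k2⟩ := hind _ _ hv1
  obtain ⟨k3, k4⟩ := hind _ _ hv2
  exact sum_sq_core h2 Δ Δ' (u 0) (u 1) (u 2) (a 0) (a 1) (a 2) hΔ'
    (by linear_combination k4) (by linear_combination k1) (by linear_combination -k2)

/-- The matrix in `sl₂` associated to a vector of `L(-1,1)`. -/
def sl2map {k : Type*} [Field k] (u : Fin 3 → k) : Matrix (Fin 2) (Fin 2) k :=
  !![-u 2/2, (u 0 - u 1)/2; (-u 0 - u 1)/2, u 2/2]

open LieAlgebra.SpecialLinear in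
def sl2fun {k : Type*} [Field k] (u : Fin 3 → k) : sl (Fin 2) k :=
  ⟨sl2map u, LinearMap.mem_ker.mpr (by
    rw [Matrix.traceLinearMap_apply, Matrix.trace_fin_two, sl2map]
    simp; ring)⟩

open LieAlgebra.SpecialLinear in
def sl2inv {k : Type*} [Field k] (A : sl (Fin 2) k) : Fin 3 → k :=
  ![A.val 0 1 - A.val 1 0, -(A.val 0 1) - A.val 1 0, -2*A.val 0 0]

open LieAlgebra.SpecialLinear in
/-- `L(-1,1)` is isomorphic to `sl(2,k)`. -/
lemma sl2_bridge (k : Type*) [Field k] (h2 : (2:k) ≠ 0) :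
    ∃ E : (Fin 3 → k) ≃ₗ[k] sl (Fin 2) k,
      ∀ u v : Fin 3 → k, E (Lbracket (-1) 1 u v) = ⁅E u, E v⁆ := by
  refine ⟨⟨⟨⟨sl2fun, ?_⟩, ?_⟩, sl2inv, ?_, ?_⟩, ?_⟩
  · intro u v
    apply Subtype.ext
    show sl2map (u + v) = sl2map u + sl2map v
    ext i j
    fin_cases i <;> fin_cases j <;> simp [sl2map, Matrix.add_apply] <;> ring
  · intro c u
    apply Subtype.ext
    show sl2map (c • u) = c • sl2map u
    ext i j
    fin_cases i <;> fin_cases j <;> simp [sl2map, Matrix.smul_apply, smul_eq_mul] <;> ring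
  · intro u
    funext i
    fin_cases i <;> simp [sl2inv, sl2fun, sl2map] <;> field_simp <;> ring
  · intro A
    have hA : A.val 1 1 = -(A.val 0 0) := by
      have h : Matrix.trace A.val = 0 := LinearMap.mem_ker.mp A.2
      rw [Matrix.trace_fin_two] at h
      linear_combination h
    apply Subtype.ext
    show sl2map (sl2inv A) = A.val
    ext i j
    fin_cases i <;> fin_cases j <;> simp [sl2map, sl2inv, hA] <;> field_simp <;> ring
  · intro u v
    apply Subtype.ext
    refine Eq.trans ?_ (sl_bracket (A := sl2fun u) (B := sl2fun v)).symm
    show sl2map (Lbracket (-1) 1 u v) = sl2map u * sl2map v - sl2map v * sl2map u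
    ext i j
    fin_cases i <;> fin_cases j <;>
      simp [sl2map, Lbracket, Matrix.mul_apply, Fin.sum_univ_two, Matrix.sub_apply] <;>
      field_simp <;> ring

/-- `L(−Δ,1) ≅ L(−Δ',1)` if and only if `Δ/Δ'` is a (nonzero) sum of two squares; in
particular `L(−Δ,1)` is split iff `Δ` is a sum of two squares. -/
theorem L_negD_one_iso_iff (k : Type*) [Field k] (hchar : (2 : k) ≠ 0)
    (Δ Δ' : k) (hΔ : Δ ≠ 0) (hΔ' : Δ' ≠ 0) :
    ((∃ g : (Fin 3 → k) ≃ₗ[k] (Fin 3 → k),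
        ∀ u v : Fin 3 → k, g (Lbracket (-Δ) 1 u v) = Lbracket (-Δ') 1 (g u) (g v)) ↔
      ∃ x y : k, Δ / Δ' = x ^ 2 + y ^ 2) ∧
    ((∃ e : (Fin 3 → k) ≃ₗ[k] LieAlgebra.SpecialLinear.sl (Fin 2) k,
        ∀ u v : Fin 3 → k, e (Lbracket (-Δ) 1 u v) = ⁅e u, e v⁆) ↔
      ∃ x y : k, Δ = x ^ 2 + y ^ 2) := by
  obtain ⟨E, hE⟩ := sl2_bridge k hchar
  constructor
  · constructor
    · rintro ⟨g, hg⟩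
      exact forward_dir hchar Δ Δ' hΔ hΔ' g hg
    · rintro ⟨x, y, hxy⟩
      exact construct_iso Δ Δ' x y hΔ hΔ' hxy
  · constructor
    · rintro ⟨e, he⟩
      have hsymm : ∀ A B : LieAlgebra.SpecialLinear.sl (Fin 2) k,
          E.symm ⁅A, B⁆ = Lbracket (-1) 1 (E.symm A) (E.symm B) := by
        intro A B
        apply E.injective
        rw [hE, E.apply_symm_apply, E.apply_symm_apply, E.apply_symm_apply]
      have hprop : ∀ u v : Fin 3 → k, (e.trans E.symm) (Lbracket (-Δ) 1 u v)
          = Lbracket (-1) 1 ((e.trans E.symm) u) ((e.trans E.symm) v) := by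
        intro u v
        simp only [LinearEquiv.trans_apply]
        rw [he u v, hsymm]
      obtain ⟨x, y, h⟩ := forward_dir hchar Δ 1 hΔ one_ne_zero (e.trans E.symm) hprop
      rw [div_one] at h
      exact ⟨x, y, h⟩
    · rintro ⟨x, y, hxy⟩
      obtain ⟨g, hg⟩ := construct_iso Δ 1 x y hΔ one_ne_zero (by rw [div_one]; exact hxy)
      refine ⟨g.trans E, fun u v => ?_⟩
      simp only [LinearEquiv.trans_apply]
      rw [hg u v, hE]
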